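/- For any orthogonal projection P on a Hilbert space H, the set F_P = { T ∈ T(H)⁺₁ : T = P T P } is a face of T(H)⁺₁: it is convex, and if T ∈ F_P and T = w·T₁ + (1-w)·T₂ with w ∈ (0,1), T₁, T₂ ∈ T(H)⁺₁, then T₁ ∈ F_P and T₂ ∈ F_P. -/

import Mathlib

open scoped InnerProductSpace
open ContinuousLinearMap
variable {H : Type*} [NormedAddCommGroup H] [InnerProductSpace ℂ H] [CompleteSpace H] {ι : Type*}

/-- `T` is a quantum state: a positive trace-class operator with trace 1,
the trace being computed in the Hilbert basis `b`. -/
def IsState (b : HilbertBasis ι ℂ H) (T : H →L[ℂ] H) : Prop :=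
  T.IsPositive ∧ HasSum (fun i => (⟪ b i, T (b i)⟫_ℂ).re) 1

private lemma pos_apply_eq_zero {S : H →L[ℂ] H} (hS : S.IsPositive) {v : H}
    (hv : (⟪v, S v⟫_ℂ).re = 0) : S v = 0 := by
  have hsymm : ∀ x y : H, ⟪S x, y⟫_ℂ = ⟪x, S y⟫_ℂ :=
    fun x y => hS.1 x y
  set a : ℝ := ‖S v‖ ^ 2 with ha
  set C : ℝ := (⟪S v, S (S v)⟫_ℂ).re with hC
  have hCnn : 0 ≤ C := hS.re_inner_nonneg_right (S v)
  have hSv : (⟪S v, S v⟫_ℂ).re = a := by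
    have := inner_self_eq_norm_sq (𝕜 := ℂ) (S v)
    simpa [ha] using this
  have key : ∀ t : ℝ, 0 ≤ 2 * t * a + t ^ 2 * C := by
    intro t
    have h0 := hS.re_inner_nonneg_right (v + (t : ℂ) • S v)
    have hexp : ⟪v + (t : ℂ) • S v, S (v + (t : ℂ) • S v)⟫_ℂ
        = ⟪v, S v⟫_ℂ + (t : ℂ) * ⟪S v, S v⟫_ℂ + (t : ℂ) * ⟪S v, S v⟫_ℂ
          + (t : ℂ) * (t : ℂ) * ⟪S v, S (S v)⟫_ℂ := by
      simp only [map_add, map_smul, inner_add_left, inner_add_right,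
        inner_smul_left, inner_smul_right, Complex.conj_ofReal]
      rw [hsymm v (S v)]
      ring
    rw [hexp] at h0
    simp only [RCLike.re_to_complex, Complex.add_re, Complex.mul_re, Complex.ofReal_re,
      Complex.ofReal_im, Complex.mul_im, hv, hSv, ← hC] at h0
    nlinarith [h0]
  have hann : 0 ≤ a := by positivity
  have haz : a = 0 := by
    by_contra h
    have ha0 : 0 < a := lt_of_le_of_ne hann (Ne.symm h)
    have hC1 : (0:ℝ) < C + 1 := by linarith
    have ht := key (-(a / (C + 1)))
    have h2 : 0 ≤ (2 * (-(a / (C + 1))) * a + (-(a / (C + 1))) ^ 2 * C) * (C + 1) ^ 2 :=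
      mul_nonneg ht (by positivity)
    have h3 : (2 * (-(a / (C + 1))) * a + (-(a / (C + 1))) ^ 2 * C) * (C + 1) ^ 2
        = -2 * a ^ 2 * (C + 1) + a ^ 2 * C := by
      field_simp
    rw [h3] at h2
    nlinarith [sq_nonneg a, mul_pos ha0 ha0]
  have : ‖S v‖ = 0 := by nlinarith [norm_nonneg (S v)]
  simpa using this

/-- for an orthogonal projection `P`, the set
`F_P = { T ∈ T(H)⁺₁ : T = P T P }` is a face of the state space: it is convex
and closed under taking convex components. -/
theorem face_of_projection (b : HilbertBasis ι ℂ H) (P : H →L[ℂ] H)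
    (hP1 : IsIdempotentElem P) (hP2 : IsSelfAdjoint P) :
    (∀ T T' : H →L[ℂ] H, IsState b T → T = P ∘L T ∘L P → IsState b T' → T' = P ∘L T' ∘L P →
      ∀ w : ℝ, 0 ≤ w → w ≤ 1 →
        w • T + (1 - w) • T' = P ∘L (w • T + (1 - w) • T') ∘L P) ∧
    (∀ T T₁ T₂ : H →L[ℂ] H, IsState b T → T = P ∘L T ∘L P →
      IsState b T₁ → IsState b T₂ → ∀ w : ℝ, 0 < w → w < 1 →
        T = w • T₁ + (1 - w) • T₂ → T₁ = P ∘L T₁ ∘L P ∧ T₂ = P ∘L T₂ ∘L P) := by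
  constructor
  · intro T T' _ hT _ hT' w _ _
    have hdistrib : P ∘L (w • T + (1 - w) • T') ∘L P
        = w • (P ∘L T ∘L P) + (1 - w) • (P ∘L T' ∘L P) := by
      ext x; simp
    rw [hdistrib, ← hT, ← hT']
  · intro T T₁ T₂ hTs hT hT₁ hT₂ w hw0 hw1 hdec
    set Q : H →L[ℂ] H := 1 - P with hQ
    have hQP : ∀ x, P (Q x) = 0 := by
      intro x
      have h := congrFun (congrArg DFunLike.coe hP1) x
      rw [ContinuousLinearMap.mul_apply] at h
      simp [hQ, map_sub, h]
    have hTQ : ∀ x, (⟪Q x, T (Q x)⟫_ℂ) = 0 := by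
      intro x
      rw [hT]
      simp [comp_apply, hQP]
    have key : ∀ x, (⟪Q x, T₁ (Q x)⟫_ℂ).re = 0 ∧ (⟪Q x, T₂ (Q x)⟫_ℂ).re = 0 := by
      intro x
      have h1 : 0 ≤ (⟪Q x, T₁ (Q x)⟫_ℂ).re := hT₁.1.re_inner_nonneg_right (Q x)
      have h2 : 0 ≤ (⟪Q x, T₂ (Q x)⟫_ℂ).re := hT₂.1.re_inner_nonneg_right (Q x)
      have hsum : w * (⟪Q x, T₁ (Q x)⟫_ℂ).re + (1 - w) * (⟪Q x, T₂ (Q x)⟫_ℂ).re = 0 := by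
        have h0 := hTQ x
        rw [hdec] at h0
        have hval : ⟪Q x, w • (T₁ (Q x)) + (1 - w) • (T₂ (Q x))⟫_ℂ = 0 := by
          simpa [add_apply, smul_apply] using h0
        rw [RCLike.real_smul_eq_coe_smul (K := ℂ), RCLike.real_smul_eq_coe_smul (K := ℂ),
          inner_add_right, inner_smul_right, inner_smul_right] at hval
        have := congrArg Complex.re hval
        simpa [Complex.add_re, Complex.mul_re, Complex.ofReal_re, Complex.ofReal_im] using this
      constructor <;> nlinarith
    have hz1 : ∀ x, T₁ (Q x) = 0 := fun x => pos_apply_eq_zero hT₁.1 (key x).1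
    have hz2 : ∀ x, T₂ (Q x) = 0 := fun x => pos_apply_eq_zero hT₂.1 (key x).2
    have conclude : ∀ T' : H →L[ℂ] H, IsSelfAdjoint T' → (∀ x, T' (Q x) = 0) →
        T' = P ∘L T' ∘L P := by
      intro T' hsa hz
      have hTP : T' ∘L P = T' := by
        ext x
        have h := hz x
        simp only [hQ, sub_apply, one_apply, map_sub] at h
        have h' : T' x - T' (P x) = 0 := h
        simp [comp_apply, (sub_eq_zero.mp h').symm]
      have hPT : P ∘L T' = T' := by
        have h := congrArg star hTP
        rwa [star_eq_adjoint, star_eq_adjoint, adjoint_comp, hP2.adjoint_eq,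
          hsa.adjoint_eq] at h
      calc T' = P ∘L T' := hPT.symm
        _ = P ∘L (T' ∘L P) := by rw [hTP]
        _ = P ∘L T' ∘L P := rfl
    exact ⟨conclude T₁ hT₁.1.isSelfAdjoint hz1, conclude T₂ hT₂.1.isSelfAdjoint hz2⟩
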